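/- arXiv:1911.02074 — 2 statements merged into one kernel-verified Lean document; each statement's English description precedes it below -/
import Mathlib

section
/- Let d ≥ 1, let h : {−1,1}^d → ℝ satisfy 0 ≤ h(y) ≤ d for all y, let M ≥ 2d, define f(x) = min(M, h(round(x)) + 2M·g(x)), and let λ > 0. Then for every hypercube vertex y* ∈ {−1,1}^d, ∫_{B(y*,1/4)} exp(−λ f(x)) dx = exp(−λ h(y*)) · ∫_{B(0,1/4)} exp(−2Mλ‖z‖) dz. Consequently, for every y* ∈ {−1,1}^d, (∫_{B(y*,1/4)} exp(−λ f(x)) dx) / (Σ_{y ∈ {−1,1}^d} ∫_{B(y,1/4)} exp(−λ f(x)) dx) = exp(−λ h(y*)) / (Σ_{y ∈ {−1,1}^d} exp(−λ h(y))); that is, the Gibbs measure of f conditioned on the union of the radius-1/4 balls around hypercube vertices assigns to the ball around y* exactly the discrete Gibbs probability of y* under h. -/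
open Real MeasureTheory

/-- The coordinatewise sign vector: `round(x)_i = 1` if `x_i ≥ 0` and `-1` otherwise. -/
noncomputable def rnd {d : ℕ} (x : EuclideanSpace ℝ (Fin d)) : EuclideanSpace ℝ (Fin d) :=
  WithLp.toLp 2 (fun i => if 0 ≤ x i then 1 else -1)

/-- The continuous extension `f(x) = min(M, h(round x) + 2M·‖x - round x‖)` of a
function `h` on the hypercube vertices. -/
noncomputable def fExt {d : ℕ} (h : EuclideanSpace ℝ (Fin d) → ℝ) (M : ℝ)
    (x : EuclideanSpace ℝ (Fin d)) : ℝ :=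
  min M (h (rnd x) + 2 * M * ‖x - rnd x‖)

/-- The hypercube vertex corresponding to a sign pattern `s : Fin d → Bool`. -/
noncomputable def vtx {d : ℕ} (s : Fin d → Bool) : EuclideanSpace ℝ (Fin d) :=
  WithLp.toLp 2 (fun i => if s i then 1 else -1)

lemma abs_coord_le_norm {d : ℕ} (v : EuclideanSpace ℝ (Fin d)) (i : Fin d) :
    |v i| ≤ ‖v‖ := by
  rw [EuclideanSpace.norm_eq]
  have h1 : |v i| = Real.sqrt (‖v i‖ ^ 2) := by
    rw [Real.sqrt_sq_eq_abs, abs_norm, Real.norm_eq_abs]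
  rw [h1]
  apply Real.sqrt_le_sqrt
  exact Finset.single_le_sum (f := fun j => ‖v j‖ ^ 2) (fun j _ => by positivity)
    (Finset.mem_univ i)

lemma rnd_eq_vtx {d : ℕ} (s : Fin d → Bool) (x : EuclideanSpace ℝ (Fin d))
    (hx : x ∈ Metric.closedBall (vtx s) (1 / 4)) : rnd x = vtx s := by
  ext i
  have hb : |x i - vtx s i| ≤ 1 / 4 := by
    have := abs_coord_le_norm (x - vtx s) i
    have hx' : ‖x - vtx s‖ ≤ 1 / 4 := by
      rw [Metric.mem_closedBall, dist_eq_norm] at hx; exact hx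
    calc |x i - vtx s i| = |(x - vtx s) i| := by norm_num
      _ ≤ ‖x - vtx s‖ := this
      _ ≤ 1 / 4 := hx'
  rw [abs_le] at hb
  by_cases hs : s i
  · have hv : vtx s i = 1 := by simp [vtx, hs]
    have : (0 : ℝ) ≤ x i := by rw [hv] at hb; linarith [hb.1]
    simp [rnd, this, vtx, hs]
  · have hv : vtx s i = -1 := by simp [vtx, hs]
    have : ¬ (0 : ℝ) ≤ x i := by rw [hv] at hb; intro h; linarith [hb.2]
    simp [rnd, this, vtx, hs]

/-- The Gibbs mass of `f` on the radius-`1/4` ball around a hypercube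
vertex `y*` factors as `exp(-λ h(y*))` times a universal integral, and hence the
Gibbs measure of `f` conditioned on the union of these balls reproduces exactly the
discrete Gibbs distribution of `h`. -/
theorem gibbs_ball_mass_factors (d : ℕ) (hd : 1 ≤ d)
    (h : EuclideanSpace ℝ (Fin d) → ℝ)
    (hh : ∀ y : EuclideanSpace ℝ (Fin d), (∀ i, y i = 1 ∨ y i = -1) →
      0 ≤ h y ∧ h y ≤ (d : ℝ))
    (M : ℝ) (hM : 2 * (d : ℝ) ≤ M)
    (lam : ℝ) (hlam : 0 < lam) :
    ∀ sstar : Fin d → Bool,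
      (∫ x in Metric.closedBall (vtx sstar) (1 / 4),
          Real.exp (-(lam * fExt h M x))) =
        Real.exp (-(lam * h (vtx sstar))) *
          ∫ z in Metric.closedBall (0 : EuclideanSpace ℝ (Fin d)) (1 / 4),
            Real.exp (-(2 * M * lam * ‖z‖)) ∧
      (∫ x in Metric.closedBall (vtx sstar) (1 / 4),
          Real.exp (-(lam * fExt h M x))) /
          (∑ s : Fin d → Bool,
            ∫ x in Metric.closedBall (vtx s) (1 / 4),
              Real.exp (-(lam * fExt h M x))) =
        Real.exp (-(lam * h (vtx sstar))) /
          (∑ s : Fin d → Bool, Real.exp (-(lam * h (vtx s)))) := by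
  have hd' : (1 : ℝ) ≤ (d : ℝ) := by exact_mod_cast hd
  have hM0 : 0 < M := lt_of_lt_of_le (by linarith) hM
  -- vertices satisfy the ±1 condition
  have hvtx : ∀ s : Fin d → Bool, ∀ i, vtx s i = 1 ∨ vtx s i = -1 := by
    intro s i; by_cases hs : s i <;> simp [vtx, hs]
  -- main factorization, for every sign pattern
  have key : ∀ s : Fin d → Bool,
      (∫ x in Metric.closedBall (vtx s) (1 / 4),
          Real.exp (-(lam * fExt h M x))) =
        Real.exp (-(lam * h (vtx s))) *
          ∫ z in Metric.closedBall (0 : EuclideanSpace ℝ (Fin d)) (1 / 4),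
            Real.exp (-(2 * M * lam * ‖z‖)) := by
    intro s
    have hbd := hh (vtx s) (hvtx s)
    -- on the ball, the integrand simplifies
    have hcong : ∀ x ∈ Metric.closedBall (vtx s) (1 / 4),
        Real.exp (-(lam * fExt h M x)) =
          Real.exp (-(lam * h (vtx s))) * Real.exp (-(2 * M * lam * ‖x - vtx s‖)) := by
      intro x hx
      have hr := rnd_eq_vtx s x hx
      have hx' : ‖x - vtx s‖ ≤ 1 / 4 := by
        rw [Metric.mem_closedBall, dist_eq_norm] at hx; exact hx
      have hmin : fExt h M x = h (vtx s) + 2 * M * ‖x - vtx s‖ := by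
        unfold fExt
        rw [hr]
        apply min_eq_right
        have : 2 * M * ‖x - vtx s‖ ≤ 2 * M * (1 / 4) :=
          mul_le_mul_of_nonneg_left hx' (by linarith)
        nlinarith [hbd.2]
      rw [hmin, ← Real.exp_add]
      ring_nf
    rw [setIntegral_congr_fun (measurableSet_closedBall) hcong,
      integral_const_mul]
    congr 1
    -- translation invariance
    have hmp : MeasurePreserving (fun z : EuclideanSpace ℝ (Fin d) => vtx s + z)
        volume volume := measurePreserving_add_left volume (vtx s)
    have hemb : MeasurableEmbedding (fun z : EuclideanSpace ℝ (Fin d) => vtx s + z) :=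
      (MeasurableEquiv.addLeft (vtx s)).measurableEmbedding
    have := hmp.setIntegral_preimage_emb hemb
      (fun x => Real.exp (-(2 * M * lam * ‖x - vtx s‖)))
      (Metric.closedBall (vtx s) (1 / 4))
    rw [← this]
    have hpre : (fun z : EuclideanSpace ℝ (Fin d) => vtx s + z) ⁻¹'
        Metric.closedBall (vtx s) (1 / 4) =
        Metric.closedBall (0 : EuclideanSpace ℝ (Fin d)) (1 / 4) := by
      rw [preimage_add_closedBall]; simp
    rw [hpre]
    apply setIntegral_congr_fun measurableSet_closedBall
    intro z _
    simp
  intro sstar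
  refine ⟨key sstar, ?_⟩
  -- positivity of the universal integral
  set C := ∫ z in Metric.closedBall (0 : EuclideanSpace ℝ (Fin d)) (1 / 4),
      Real.exp (-(2 * M * lam * ‖z‖)) with hC
  have hcont : Continuous (fun z : EuclideanSpace ℝ (Fin d) =>
      Real.exp (-(2 * M * lam * ‖z‖))) := by
    continuity
  have hint : IntegrableOn (fun z : EuclideanSpace ℝ (Fin d) =>
      Real.exp (-(2 * M * lam * ‖z‖)))
      (Metric.closedBall (0 : EuclideanSpace ℝ (Fin d)) (1 / 4)) volume :=
    hcont.continuousOn.integrableOn_compact (isCompact_closedBall _ _)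
  have hCpos : 0 < C := by
    rw [hC, setIntegral_pos_iff_support_of_nonneg_ae
      (Filter.Eventually.of_forall fun z => (Real.exp_pos _).le) hint]
    have hsupp : Function.support (fun z : EuclideanSpace ℝ (Fin d) =>
        Real.exp (-(2 * M * lam * ‖z‖))) = Set.univ := by
      ext z; simp [Function.mem_support, (Real.exp_pos _).ne']
    rw [hsupp, Set.univ_inter]
    exact Metric.measure_closedBall_pos volume _ (by norm_num)
  simp_rw [key]
  rw [← Finset.sum_mul]
  rw [mul_div_mul_right _ _ (ne_of_gt hCpos)]
end

section
/- Let d ≥ 1, let h : {−1,1}^d → ℝ satisfy 0 ≤ h(y) ≤ d for all y, let M ≥ 2d, define f(x) = min(M, h(round(x)) + 2M·g(x)), and let λ > 0. Then for every hypercube vertex y ∈ {−1,1}^d, ∫_{B(y,1/8)} exp(−λ f(x)) dx ≥ exp(−3λM/4) · (1/8)^d · vol(B_d(0,1)), where vol(B_d(0,1)) is the Lebesgue volume of the unit ball in ℝ^d. -/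
open Real MeasureTheory

lemma coord_le_norm {d : ℕ} (x : EuclideanSpace ℝ (Fin d)) (i : Fin d) : |x i| ≤ ‖x‖ := by
  rw [EuclideanSpace.norm_eq]
  calc |x i| = Real.sqrt (‖x i‖ ^ 2) := by
        rw [Real.sqrt_sq_eq_abs]; simp
    _ ≤ Real.sqrt (∑ j, ‖x j‖ ^ 2) := by
        apply Real.sqrt_le_sqrt
        exact Finset.single_le_sum (f := fun j => ‖x j‖ ^ 2) (fun j _ => by positivity) (Finset.mem_univ i)

/-- Every radius-`1/8` ball around a hypercube vertex carries Gibbs mass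
at least `exp(-3λM/4) · (1/8)^d · vol(B_d(0,1))`. -/
theorem gibbs_vertex_ball_lower_bound (d : ℕ) (hd : 1 ≤ d)
    (h : EuclideanSpace ℝ (Fin d) → ℝ)
    (hh : ∀ y : EuclideanSpace ℝ (Fin d), (∀ i, y i = 1 ∨ y i = -1) →
      0 ≤ h y ∧ h y ≤ (d : ℝ))
    (M : ℝ) (hM : 2 * (d : ℝ) ≤ M)
    (lam : ℝ) (hlam : 0 < lam) :
    ∀ s : Fin d → Bool,
      Real.exp (-(3 * lam * M / 4)) * (1 / 8 : ℝ) ^ d *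
          (volume (Metric.closedBall (0 : EuclideanSpace ℝ (Fin d)) 1)).toReal ≤
        ∫ x in Metric.closedBall (vtx s) (1 / 8), Real.exp (-(lam * fExt h M x)) := by
  intro s
  have hdpos : (0:ℝ) < d := by exact_mod_cast hd
  have hMpos : (0:ℝ) < M := lt_of_lt_of_le (by linarith) hM
  set y : EuclideanSpace ℝ (Fin d) := vtx s with hy_def
  have hy : ∀ i, y i = 1 ∨ y i = -1 := by
    intro i; by_cases hb : s i <;> simp [hy_def, vtx, hb]
  -- rnd is constant on the ball
  have hrnd : ∀ x ∈ Metric.closedBall y (1/8 : ℝ), rnd x = y := by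
    intro x hx
    have hdist : ‖x - y‖ ≤ 1/8 := by
      rw [Metric.mem_closedBall, dist_eq_norm] at hx; exact hx
    ext i
    have hci : |x i - y i| ≤ 1/8 :=
      le_trans (by simpa using coord_le_norm (x - y) i) hdist
    rcases hy i with h1 | h1
    · have : (0:ℝ) ≤ x i := by
        rw [abs_le] at hci; rw [h1] at hci; linarith [hci.1]
      simp [rnd, this, h1]
    · have : ¬ (0:ℝ) ≤ x i := by
        rw [abs_le] at hci; rw [h1] at hci; push_neg; linarith [hci.2]
      simp [rnd, this, h1]
  have hhy := hh y hy
  -- bound on fExt on the ball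
  have hfle : ∀ x ∈ Metric.closedBall y (1/8 : ℝ), fExt h M x ≤ 3 * M / 4 := by
    intro x hx
    have hdist : ‖x - y‖ ≤ 1/8 := by
      rw [Metric.mem_closedBall, dist_eq_norm] at hx; exact hx
    rw [fExt, hrnd x hx]
    refine le_trans (min_le_right _ _) ?_
    have h2 : 2 * M * ‖x - y‖ ≤ 2 * M * (1/8) := by
      apply mul_le_mul_of_nonneg_left hdist; linarith
    linarith [hhy.2]
  have hf0 : ∀ x ∈ Metric.closedBall y (1/8 : ℝ), 0 ≤ fExt h M x := by
    intro x hx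
    rw [fExt, hrnd x hx]
    have : 0 ≤ 2 * M * ‖x - y‖ := by positivity
    exact le_min (le_of_lt hMpos) (by linarith [hhy.1])
  -- replace integrand on the ball by a continuous function
  have hcongr : ∫ x in Metric.closedBall y (1/8 : ℝ), Real.exp (-(lam * fExt h M x)) =
      ∫ x in Metric.closedBall y (1/8 : ℝ),
        Real.exp (-(lam * min M (h y + 2 * M * ‖x - y‖))) := by
    apply setIntegral_congr_fun (measurableSet_closedBall)
    intro x hx
    unfold fExt
    simp only [hrnd x hx]
  rw [hcongr]
  have hcont : Continuous fun x : EuclideanSpace ℝ (Fin d) =>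
      Real.exp (-(lam * min M (h y + 2 * M * ‖x - y‖))) := by fun_prop
  have hint : IntegrableOn (fun x : EuclideanSpace ℝ (Fin d) =>
      Real.exp (-(lam * min M (h y + 2 * M * ‖x - y‖))))
      (Metric.closedBall y (1/8 : ℝ)) volume :=
    hcont.continuousOn.integrableOn_compact (isCompact_closedBall _ _)
  have hvol_ne : volume (Metric.closedBall y (1/8 : ℝ)) ≠ ⊤ :=
    (isCompact_closedBall _ _).measure_lt_top.ne
  have hlb := setIntegral_ge_of_const_le (c := Real.exp (-(3 * lam * M / 4)))
      measurableSet_closedBall hvol_ne ?_ hint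
  · -- now rewrite volume
    have hvol : volume (Metric.closedBall y (1/8 : ℝ)) =
        ENNReal.ofReal ((1/8 : ℝ) ^ (Module.finrank ℝ (EuclideanSpace ℝ (Fin d)))) *
          volume (Metric.closedBall (0 : EuclideanSpace ℝ (Fin d)) 1) :=
      Measure.addHaar_closedBall' _ y (by norm_num)
    have hrank : Module.finrank ℝ (EuclideanSpace ℝ (Fin d)) = d := by
      simp [finrank_euclideanSpace]
    rw [measureReal_def, hvol, hrank] at hlb
    rw [ENNReal.toReal_mul, ENNReal.toReal_ofReal (by positivity)] at hlb
    calc Real.exp (-(3 * lam * M / 4)) * (1/8 : ℝ) ^ d *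
          (volume (Metric.closedBall (0 : EuclideanSpace ℝ (Fin d)) 1)).toReal
        = Real.exp (-(3 * lam * M / 4)) *
          ((1/8 : ℝ) ^ d * (volume (Metric.closedBall (0 : EuclideanSpace ℝ (Fin d)) 1)).toReal) := by ring
      _ ≤ _ := by rw [smul_eq_mul] at hlb; linarith
  · intro x hx
    apply Real.exp_le_exp.mpr
    have h1 : min M (h y + 2 * M * ‖x - y‖) ≤ 3 * M / 4 := by
      have := hfle x hx
      rwa [fExt, hrnd x hx] at this
    have : lam * min M (h y + 2 * M * ‖x - y‖) ≤ lam * (3 * M / 4) :=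
      mul_le_mul_of_nonneg_left h1 hlam.le
    linarith
end
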